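/- Let p and q be nonzero real quadratics with ⟨p,q⟩ = 0, with polarizations p(x,y) = p₀xy + p₁(x+y) + p₂ and q(x,y) = q₀xy + q₁(x+y) + q₂, and define h(x,y) = (x−y)q(x,y)/p(x,y)² on the (nonempty, open) set Ω = {(x,y) ∈ ℝ² : p(x,y) ≠ 0}. Then the mixed second partial derivative ∂²h/∂x∂y vanishes identically on Ω if and only if p₁² = p₀p₂ (i.e. Q(p) = 0). -/

import Mathlib

open Filter Topology

private lemma lin_hasDerivAt (a b t : ℝ) : HasDerivAt (fun s : ℝ => a * s + b) a t := by
  simpa using ((hasDerivAt_id t).const_mul a).add_const b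

private lemma cubic_hasDerivAt (a b c d t : ℝ) :
    HasDerivAt (fun s : ℝ => a * s ^ 3 + b * s ^ 2 + c * s + d)
      (3 * a * t ^ 2 + 2 * b * t + c) t := by
  have h3 : HasDerivAt (fun s : ℝ => s ^ 3) (3 * t ^ 2) t := by
    simpa using hasDerivAt_pow 3 t
  have h2 : HasDerivAt (fun s : ℝ => s ^ 2) (2 * t) t := by
    simpa using hasDerivAt_pow 2 t
  have h1 : HasDerivAt (fun s : ℝ => c * s) c t := by
    simpa using (hasDerivAt_id t).const_mul c
  have := (((h3.const_mul a).add (h2.const_mul b)).add h1).add_const d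
  refine this.congr_deriv ?_
  ring

private lemma inner_hasDerivAt (p0 p1 p2 q0 q1 q2 x y : ℝ)
    (hP : p0 * x * y + p1 * (x + y) + p2 ≠ 0) :
    HasDerivAt (fun x' : ℝ =>
        (x' - y) * (q0 * x' * y + q1 * (x' + y) + q2)
          / (p0 * x' * y + p1 * (x' + y) + p2) ^ 2)
      (((-(p1*q0) + 2*p0*q1 + p0*q0*x) * y ^ 3
        + (-(p2*q0) + 2*p1*q1 + 3*p1*q0*x + 2*p0*q2) * y ^ 2
        + (3*p1*q2 + (2*p2*q0 + 2*p1*q1 - p0*q2)*x) * y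
        + (p2*q2 + (2*p2*q1 - p1*q2)*x))
        / (p0 * x * y + p1 * (x + y) + p2) ^ 3) x := by
  have h1 : HasDerivAt (fun x' : ℝ => x' - y) 1 x := (hasDerivAt_id x).sub_const y
  have h2 : HasDerivAt (fun x' : ℝ => q0 * x' * y + q1 * (x' + y) + q2) (q0 * y + q1) x := by
    have h := lin_hasDerivAt (q0 * y + q1) (q1 * y + q2) x
    have hfun : (fun x' : ℝ => q0 * x' * y + q1 * (x' + y) + q2)
        = fun x' : ℝ => (q0 * y + q1) * x' + (q1 * y + q2) := by
      funext s; ring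
    rw [hfun]; exact h
  have hb : HasDerivAt (fun x' : ℝ => p0 * x' * y + p1 * (x' + y) + p2) (p0 * y + p1) x := by
    have h := lin_hasDerivAt (p0 * y + p1) (p1 * y + p2) x
    have hfun : (fun x' : ℝ => p0 * x' * y + p1 * (x' + y) + p2)
        = fun x' : ℝ => (p0 * y + p1) * x' + (p1 * y + p2) := by
      funext s; ring
    rw [hfun]; exact h
  have hf := h1.mul h2
  have hg : HasDerivAt (fun x' : ℝ => (p0 * x' * y + p1 * (x' + y) + p2) ^ 2)
      (2 * (p0 * x * y + p1 * (x + y) + p2) * (p0 * y + p1)) x := by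
    have := hb.pow 2
    refine this.congr_deriv ?_
    push_cast
    ring
  have hPn : (p0 * x * y + p1 * (x + y) + p2) ^ 2 ≠ 0 := pow_ne_zero _ hP
  have hdiv := hf.div hg hPn
  refine hdiv.congr_deriv ?_
  simp only [Pi.mul_apply]
  field_simp
  ring

private lemma outer_hasDerivAt (p0 p1 p2 q0 q1 q2 x y : ℝ)
    (hP : p0 * x * y + p1 * (x + y) + p2 ≠ 0) :
    HasDerivAt (fun y' : ℝ =>
        ((-(p1*q0) + 2*p0*q1 + p0*q0*x) * y' ^ 3
        + (-(p2*q0) + 2*p1*q1 + 3*p1*q0*x + 2*p0*q2) * y' ^ 2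
        + (3*p1*q2 + (2*p2*q0 + 2*p1*q1 - p0*q2)*x) * y'
        + (p2*q2 + (2*p2*q1 - p1*q2)*x))
        / (p0 * x * y' + p1 * (x + y') + p2) ^ 3)
      ((6 * (p1 ^ 2 - p0 * p2) * ((x - y) * (q0 * x * y + q1 * (x + y) + q2))
        - 2 * (2 * p1 * q1 - (p2 * q0 + p0 * q2))
            * ((x - y) * (p0 * x * y + p1 * (x + y) + p2)))
        / (p0 * x * y + p1 * (x + y) + p2) ^ 4) y := by
  have hf := cubic_hasDerivAt (-(p1*q0) + 2*p0*q1 + p0*q0*x)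
      (-(p2*q0) + 2*p1*q1 + 3*p1*q0*x + 2*p0*q2)
      (3*p1*q2 + (2*p2*q0 + 2*p1*q1 - p0*q2)*x)
      (p2*q2 + (2*p2*q1 - p1*q2)*x) y
  have hb : HasDerivAt (fun y' : ℝ => p0 * x * y' + p1 * (x + y') + p2) (p0 * x + p1) y := by
    have h := lin_hasDerivAt (p0 * x + p1) (p1 * x + p2) y
    have hfun : (fun y' : ℝ => p0 * x * y' + p1 * (x + y') + p2)
        = fun y' : ℝ => (p0 * x + p1) * y' + (p1 * x + p2) := by
      funext s; ring
    rw [hfun]; exact h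
  have hg : HasDerivAt (fun y' : ℝ => (p0 * x * y' + p1 * (x + y') + p2) ^ 3)
      (3 * (p0 * x * y + p1 * (x + y) + p2) ^ 2 * (p0 * x + p1)) y := by
    have := hb.pow 3
    refine this.congr_deriv ?_
    try push_cast
    try ring
  have hPn : (p0 * x * y + p1 * (x + y) + p2) ^ 3 ≠ 0 := pow_ne_zero _ hP
  have hdiv := hf.div hg hPn
  refine hdiv.congr_deriv ?_
  field_simp
  ring

private lemma mixed_deriv_eq (p0 p1 p2 q0 q1 q2 x y : ℝ)
    (hP : p0 * x * y + p1 * (x + y) + p2 ≠ 0) :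
    deriv (fun y' : ℝ => deriv (fun x' : ℝ =>
        (x' - y') * (q0 * x' * y' + q1 * (x' + y') + q2)
          / (p0 * x' * y' + p1 * (x' + y') + p2) ^ 2) x) y
      = (6 * (p1 ^ 2 - p0 * p2) * ((x - y) * (q0 * x * y + q1 * (x + y) + q2))
        - 2 * (2 * p1 * q1 - (p2 * q0 + p0 * q2))
            * ((x - y) * (p0 * x * y + p1 * (x + y) + p2)))
        / (p0 * x * y + p1 * (x + y) + p2) ^ 4 := by
  have hcont : Continuous (fun y' : ℝ => p0 * x * y' + p1 * (x + y') + p2) := by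
    continuity
  have hev : ∀ᶠ y' in 𝓝 y, p0 * x * y' + p1 * (x + y') + p2 ≠ 0 :=
    hcont.continuousAt.eventually_ne hP
  have heq : (fun y' : ℝ => deriv (fun x' : ℝ =>
        (x' - y') * (q0 * x' * y' + q1 * (x' + y') + q2)
          / (p0 * x' * y' + p1 * (x' + y') + p2) ^ 2) x)
      =ᶠ[𝓝 y] (fun y' : ℝ =>
        ((-(p1*q0) + 2*p0*q1 + p0*q0*x) * y' ^ 3
        + (-(p2*q0) + 2*p1*q1 + 3*p1*q0*x + 2*p0*q2) * y' ^ 2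
        + (3*p1*q2 + (2*p2*q0 + 2*p1*q1 - p0*q2)*x) * y'
        + (p2*q2 + (2*p2*q1 - p1*q2)*x))
        / (p0 * x * y' + p1 * (x + y') + p2) ^ 3) := by
    filter_upwards [hev] with y' hy'
    exact (inner_hasDerivAt p0 p1 p2 q0 q1 q2 x y' hy').deriv
  rw [heq.deriv_eq]
  exact (outer_hasDerivAt p0 p1 p2 q0 q1 q2 x y hP).deriv

private lemma quad_vanish (q0 q1 q2 x1 x2 y1 y2 : ℝ) (hx : x1 ≠ x2) (hy : y1 ≠ y2)
    (h11 : q0 * x1 * y1 + q1 * (x1 + y1) + q2 = 0)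
    (h12 : q0 * x1 * y2 + q1 * (x1 + y2) + q2 = 0)
    (h21 : q0 * x2 * y1 + q1 * (x2 + y1) + q2 = 0)
    (h22 : q0 * x2 * y2 + q1 * (x2 + y2) + q2 = 0) :
    q0 = 0 ∧ q1 = 0 ∧ q2 = 0 := by
  have hy' : y1 - y2 ≠ 0 := sub_ne_zero.mpr hy
  have hx' : x1 - x2 ≠ 0 := sub_ne_zero.mpr hx
  have e1 : (q0 * x1 + q1) * (y1 - y2) = 0 := by linear_combination h11 - h12
  have e2 : (q0 * x2 + q1) * (y1 - y2) = 0 := by linear_combination h21 - h22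
  have f1 : q0 * x1 + q1 = 0 := by
    rcases mul_eq_zero.mp e1 with h | h
    · exact h
    · exact absurd h hy'
  have f2 : q0 * x2 + q1 = 0 := by
    rcases mul_eq_zero.mp e2 with h | h
    · exact h
    · exact absurd h hy'
  have g0 : q0 * (x1 - x2) = 0 := by linear_combination f1 - f2
  have hq0 : q0 = 0 := by
    rcases mul_eq_zero.mp g0 with h | h
    · exact h
    · exact absurd h hx'
  have hq1 : q1 = 0 := by linear_combination f1 - x1 * hq0
  have hq2 : q2 = 0 := by linear_combination h11 - x1 * y1 * hq0 - (x1 + y1) * hq1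
  exact ⟨hq0, hq1, hq2⟩

set_option maxHeartbeats 1000000 in
/-- For nonzero orthogonal real quadratics `p`, `q`, the function
`h(x,y) = (x−y)q(x,y)/p(x,y)²` on `Ω = {p(x,y) ≠ 0}` has identically vanishing mixed
second partial derivative `∂²h/∂x∂y` iff `p` is null, i.e. `p₁² = p₀p₂`. -/
theorem killing_tensor_mixed_partial
    (p0 p1 p2 q0 q1 q2 : ℝ)
    (hp : ¬(p0 = 0 ∧ p1 = 0 ∧ p2 = 0)) (hq : ¬(q0 = 0 ∧ q1 = 0 ∧ q2 = 0))
    (horth : 2 * p1 * q1 - (p2 * q0 + p0 * q2) = 0) :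
    (∀ x y : ℝ, p0 * x * y + p1 * (x + y) + p2 ≠ 0 →
      deriv (fun y' : ℝ => deriv (fun x' : ℝ =>
        (x' - y') * (q0 * x' * y' + q1 * (x' + y') + q2)
          / (p0 * x' * y' + p1 * (x' + y') + p2) ^ 2) x) y = 0)
    ↔ p1 ^ 2 = p0 * p2 := by
  constructor
  · intro H
    by_contra hD
    -- From the hypothesis, (x-y) * q(x,y) vanishes on Ω.
    have key : ∀ x y : ℝ, p0 * x * y + p1 * (x + y) + p2 ≠ 0 →
        (x - y) * (q0 * x * y + q1 * (x + y) + q2) = 0 := by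
      intro x y hP
      have hval := H x y hP
      rw [mixed_deriv_eq p0 p1 p2 q0 q1 q2 x y hP] at hval
      rw [div_eq_zero_iff] at hval
      rcases hval with hval | hval
      · rw [horth] at hval
        have h' : (6 * (p1 ^ 2 - p0 * p2)) *
            ((x - y) * (q0 * x * y + q1 * (x + y) + q2)) = 0 := by
          linear_combination hval
        rcases mul_eq_zero.mp h' with h | h
        · exact absurd (by linarith : p1 ^ 2 = p0 * p2) hD
        · exact h
      · exact absurd hval (pow_ne_zero _ hP)
    -- Find a point where p(x,y) ≠ 0.
    have hex : ∃ a b : ℝ, p0 * a * b + p1 * (a + b) + p2 ≠ 0 := by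
      by_contra hc
      push_neg at hc
      have h00 := hc 0 0
      have h10 := hc 1 0
      have h11 := hc 1 1
      norm_num at h00 h10 h11
      exact hp ⟨by linarith, by linarith, h00⟩
    obtain ⟨a, b, hab⟩ := hex
    -- p ≠ 0 on a small ball around (a,b).
    have hcont : Continuous (fun z : ℝ × ℝ => p0 * z.1 * z.2 + p1 * (z.1 + z.2) + p2) := by
      continuity
    have hev : ∀ᶠ z in 𝓝 ((a, b) : ℝ × ℝ),
        p0 * z.1 * z.2 + p1 * (z.1 + z.2) + p2 ≠ 0 :=
      hcont.continuousAt.eventually_ne hab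
    obtain ⟨ε, hεpos, hball⟩ := Metric.eventually_nhds_iff.mp hev
    have hball' : ∀ s t : ℝ, |s| < ε → |t| < ε →
        p0 * (a + s) * (b + t) + p1 * ((a + s) + (b + t)) + p2 ≠ 0 := by
      intro s t hs ht
      have hd : dist ((a + s, b + t) : ℝ × ℝ) (a, b) < ε := by
        rw [Prod.dist_eq]
        apply max_lt
        · simpa [Real.dist_eq] using hs
        · simpa [Real.dist_eq] using ht
      exact hball hd
    -- Choose a small grid of points avoiding the diagonal, and conclude q = 0.
    have main : ∀ ε1 : ℝ, 0 < ε1 → (∀ k : ℝ, 2 * ε1 ≤ k → k ≤ 4 * ε1 → a - b + k ≠ 0) →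
        2 * ε1 < ε → False := by
      intro ε1 hε1 hdiag hsmall
      have hgrid : ∀ i j : ℝ, 1 ≤ i → i ≤ 2 → 1 ≤ j → j ≤ 2 →
          q0 * (a + i * ε1) * (b - j * ε1) + q1 * ((a + i * ε1) + (b - j * ε1)) + q2 = 0 := by
        intro i j hi1 hi2 hj1 hj2
        have hPij : p0 * (a + i * ε1) * (b + (-(j * ε1))) +
            p1 * ((a + i * ε1) + (b + (-(j * ε1)))) + p2 ≠ 0 := by
          apply hball' (i * ε1) (-(j * ε1))
          · rw [abs_of_nonneg (by nlinarith : (0:ℝ) ≤ i * ε1)]; nlinarith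
          · rw [abs_of_nonpos (by nlinarith : -(j * ε1) ≤ 0)]; nlinarith
        have hPij' : p0 * (a + i * ε1) * (b - j * ε1) +
            p1 * ((a + i * ε1) + (b - j * ε1)) + p2 ≠ 0 := by
          intro h; apply hPij; linear_combination h
        have hkey := key (a + i * ε1) (b - j * ε1) hPij'
        have hne : (a + i * ε1) - (b - j * ε1) ≠ 0 := by
          have := hdiag ((i + j) * ε1) (by nlinarith) (by nlinarith)
          intro h; apply this; linear_combination h
        rcases mul_eq_zero.mp hkey with h | h
        · exact absurd h hne
        · exact h
      have h11 := hgrid 1 1 le_rfl (by norm_num) le_rfl (by norm_num)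
      have h12 := hgrid 1 2 le_rfl (by norm_num) (by norm_num) le_rfl
      have h21 := hgrid 2 1 (by norm_num) le_rfl le_rfl (by norm_num)
      have h22 := hgrid 2 2 (by norm_num) le_rfl (by norm_num) le_rfl
      have hx : a + 1 * ε1 ≠ a + 2 * ε1 := by intro h; nlinarith [h, hε1]
      have hy : b - 1 * ε1 ≠ b - 2 * ε1 := by intro h; nlinarith [h, hε1]
      exact hq (quad_vanish q0 q1 q2 _ _ _ _ hx hy h11 h12 h21 h22)
    rcases le_or_gt b a with hba | hba
    · -- a - b ≥ 0, diagonal is never hit with positive shifts.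
      apply main (ε / 6) (by linarith)
      · intro k hk1 hk2 h
        nlinarith
      · linarith
    · -- a < b: also keep shifts below (b - a).
      apply main (min (ε / 6) ((b - a) / 6))
        (lt_min (by linarith) (by linarith))
      · intro k hk1 hk2 h
        have h1 : min (ε / 6) ((b - a) / 6) ≤ (b - a) / 6 := min_le_right _ _
        nlinarith
      · have h1 : min (ε / 6) ((b - a) / 6) ≤ ε / 6 := min_le_left _ _
        linarith
  · intro hD x y hP
    rw [mixed_deriv_eq p0 p1 p2 q0 q1 q2 x y hP, horth, hD]
    simp
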